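/- Let ζ ∈ ℂ be a root of unity and let ℓ ≥ 1 be an integer. Then the collection of multisets M of complex roots of unity such that M has cardinality ℓ, ζ is an element of M, the sum of the elements of M (with multiplicity) equals 0, and no nonempty proper submultiset of M has element-sum 0 (i.e. M is a minimal vanishing sum of roots of unity of length ℓ containing ζ), is finite of cardinality at most ℓ^{3ℓ²}. -/

import Mathlib

open Polynomial IntermediateField Module

noncomputable section

lemma sum_filter_classes (W : Multiset ℂ) (f : ℂ → ℕ) (R : ℕ) (h : ∀ w ∈ W, f w < R) :
    ∑ r ∈ Finset.range R, (W.filter (fun w => f w = r)).sum = W.sum := by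
  induction W using Multiset.induction with
  | empty => simp
  | cons a s ih =>
    have ha : f a < R := h a (Multiset.mem_cons_self a s)
    have hs := fun w hw => h w (Multiset.mem_cons_of_mem hw)
    simp only [Multiset.filter_cons, Multiset.sum_add, Multiset.sum_cons]
    rw [Finset.sum_add_distrib, ih hs]
    congr 1
    have : ∀ r ∈ Finset.range R, (if f a = r then ({a} : Multiset ℂ) else 0).sum
        = if f a = r then a else 0 := by
      intro r _
      split <;> simp
    rw [Finset.sum_congr rfl this, Finset.sum_ite_eq]
    simp [Finset.mem_range.2 ha]

lemma mem_adjoin_of_pow_eq_one {x ε : ℂ} {k : ℕ} (hk : 0 < k)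
    (hε : IsPrimitiveRoot ε k) (hx : x ^ k = 1) : x ∈ ℚ⟮ε⟯ := by
  haveI : NeZero k := ⟨hk.ne'⟩
  obtain ⟨i, _, rfl⟩ := hε.eq_pow_of_pow_eq_one hx
  exact pow_mem (mem_adjoin_simple_self ℚ ε) i

lemma isIntegral_of_pow_eq_one {x : ℂ} {k : ℕ} (hk : 0 < k) (hx : x ^ k = 1) :
    IsIntegral ℚ x := by
  refine ⟨X ^ k - 1, ?_, ?_⟩
  · exact monic_X_pow_sub_C 1 hk.ne'
  · simp [hx]

lemma finrank_adjoin_primroot {μ : ℂ} {k : ℕ} (hk : 0 < k) (hμ : IsPrimitiveRoot μ k) :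
    finrank ℚ ℚ⟮μ⟯ = Nat.totient k := by
  rw [IntermediateField.adjoin.finrank (isIntegral_of_pow_eq_one hk hμ.pow_eq_one),
    ← Polynomial.cyclotomic_eq_minpoly_rat hμ hk, natDegree_cyclotomic]

lemma li_lemma (K : IntermediateField ℚ ℂ) (x : ℂ) (hx : IsIntegral K x)
    (S : ℕ → ℂ) (hS : ∀ r, S r ∈ K)
    (hsum : ∑ r ∈ Finset.range (finrank K K⟮x⟯), S r * x ^ r = 0) :
    ∀ r < finrank K K⟮x⟯, S r = 0 := by
  set d := finrank K K⟮x⟯ with hd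
  set S' : ℕ → K := fun r => ⟨S r, hS r⟩ with hS'
  set P : Polynomial K := ∑ r ∈ Finset.range d, Polynomial.monomial r (S' r) with hP
  have hcoeff : ∀ r < d, P.coeff r = S' r := by
    intro r hr
    rw [hP, Polynomial.finset_sum_coeff]
    rw [Finset.sum_congr rfl (fun i _ => Polynomial.coeff_monomial (n := i))]
    rw [Finset.sum_ite_eq' (Finset.range d) r S']
    simp [Finset.mem_range.2 hr]
  have haev : Polynomial.aeval x P = 0 := by
    rw [hP, map_sum]
    rw [Finset.sum_congr rfl (fun i _ => Polynomial.aeval_monomial (n := i) (x := x))]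
    simpa using hsum
  have hPdeg : P.degree < d := by
    rw [hP]
    apply lt_of_le_of_lt (Polynomial.degree_sum_le _ _)
    refine (Finset.sup_lt_iff (WithBot.bot_lt_coe d)).mpr ?_
    intro i hi
    apply lt_of_le_of_lt (Polynomial.degree_monomial_le i _)
    exact WithBot.coe_lt_coe.2 (Finset.mem_range.1 hi)
  have hP0 : P = 0 := by
    by_contra hne
    have h1 := minpoly.degree_le_of_ne_zero K x hne haev
    have h2 : (minpoly K x).natDegree = d := (IntermediateField.adjoin.finrank hx).symm
    have h3 : (minpoly K x).degree = d := by
      rw [Polynomial.degree_eq_natDegree (minpoly.ne_zero hx), h2]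
    rw [h3] at h1
    exact absurd (lt_of_le_of_lt h1 hPdeg) (lt_irrefl _)
  intro r hr
  have := hcoeff r hr
  rw [hP0] at this
  have : S' r = 0 := by simpa using this.symm
  simpa [hS'] using congrArg (Subtype.val) this

lemma finrank_adjoin_tower {n t : ℕ} (hn : 0 < n) (ht : 0 < t) {ζn ε x : ℂ}
    (hζn : IsPrimitiveRoot ζn n) (hε : IsPrimitiveRoot ε t)
    (hxi : IsIntegral ℚ x)
    (hεmem : ε ∈ ℚ⟮ζn⟯) (hxmem : x ∈ ℚ⟮ζn⟯)
    (hζmem : ζn ∈ adjoin ℚ ({ε, x} : Set ℂ)) :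
    finrank ℚ⟮ε⟯ ℚ⟮ε⟯⟮x⟯ * Nat.totient t = Nat.totient n := by
  have heq : adjoin ℚ ({ε, x} : Set ℂ) = ℚ⟮ζn⟯ := by
    apply le_antisymm
    · rw [adjoin_le_iff]
      intro y hy
      rcases hy with rfl | hy
      · exact hεmem
      · rw [Set.mem_singleton_iff] at hy; subst hy; exact hxmem
    · rw [adjoin_le_iff]
      intro y hy
      rw [Set.mem_singleton_iff] at hy; subst hy; exact hζmem
  have hres : (ℚ⟮ε⟯⟮x⟯).restrictScalars ℚ = ℚ⟮ζn⟯ := by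
    rw [← heq]; exact adjoin_simple_adjoin_simple ..
  haveI : FiniteDimensional ℚ⟮ε⟯ ℚ⟮ε⟯⟮x⟯ :=
    IntermediateField.adjoin.finiteDimensional (hxi.tower_top)
  have h1 : finrank ℚ ℚ⟮ε⟯ = Nat.totient t := finrank_adjoin_primroot ht hε
  have h2 : finrank ℚ ℚ⟮ζn⟯ = Nat.totient n := finrank_adjoin_primroot hn hζn
  have h4 : finrank ℚ (ℚ⟮ε⟯⟮x⟯.restrictScalars ℚ) = Nat.totient n := by rw [hres, h2]
  have h5 : finrank ℚ ℚ⟮ε⟯ * finrank ℚ⟮ε⟯ ℚ⟮ε⟯⟮x⟯ = finrank ℚ ℚ⟮ε⟯⟮x⟯ :=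
    Module.finrank_mul_finrank ℚ ℚ⟮ε⟯ ℚ⟮ε⟯⟮x⟯
  have h6 : finrank ℚ ℚ⟮ε⟯⟮x⟯ = finrank ℚ (ℚ⟮ε⟯⟮x⟯.restrictScalars ℚ) := rfl
  rw [mul_comm, h1] at h5
  rw [h6, h4] at h5
  exact h5

lemma natDegree_geom_sum_X {F : Type*} [Field F] {p : ℕ} (hp : 0 < p) :
    (∑ c ∈ Finset.range p, (X : Polynomial F) ^ c).natDegree = p - 1 := by
  have hcoeff : ∀ k, (∑ c ∈ Finset.range p, (X : Polynomial F) ^ c).coeff k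
      = if k ∈ Finset.range p then 1 else 0 := by
    intro k
    rw [Polynomial.finset_sum_coeff]
    rw [Finset.sum_congr rfl (fun c _ => Polynomial.coeff_X_pow c k)]
    exact Finset.sum_ite_eq (Finset.range p) k (fun _ => (1:F))
  apply le_antisymm
  · apply Polynomial.natDegree_sum_le_of_forall_le
    intro c hc
    rw [Polynomial.natDegree_X_pow]
    exact Nat.le_sub_one_of_lt (Finset.mem_range.1 hc)
  · apply Polynomial.le_natDegree_of_ne_zero
    rw [hcoeff]
    simp only [Finset.mem_range]
    rw [if_pos (by omega)]
    exact one_ne_zero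

lemma minpoly_geom_sum {F : IntermediateField ℚ ℂ} {ω : ℂ} {p : ℕ} (hp : 0 < p)
    (hω : ω ^ p = 1) (hω1 : ω ≠ 1) (hd : finrank F F⟮ω⟯ = p - 1) :
    minpoly F ω = ∑ c ∈ Finset.range p, (X : Polynomial F) ^ c := by
  have hint : IsIntegral F ω := (isIntegral_of_pow_eq_one hp hω).tower_top
  have hsum0 : ∑ c ∈ Finset.range p, ω ^ c = 0 := by
    have := geom_sum_mul ω p
    rw [hω, sub_self] at this
    rcases mul_eq_zero.1 this with h | h
    · exact h
    · exact absurd (sub_eq_zero.1 h) hω1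
  have haev : Polynomial.aeval ω (∑ c ∈ Finset.range p, (X : Polynomial F) ^ c) = 0 := by
    rw [map_sum]
    simpa using hsum0
  have hdvd := minpoly.dvd F ω haev
  have hmon : (∑ c ∈ Finset.range p, (X : Polynomial F) ^ c).Monic :=
    Polynomial.monic_geom_sum_X hp.ne'
  have hdeg1 : (minpoly F ω).natDegree = p - 1 := by
    rw [← IntermediateField.adjoin.finrank hint, hd]
  apply (Polynomial.eq_of_monic_of_dvd_of_natDegree_le (minpoly.monic hint) hmon hdvd ?_).symm
  rw [hdeg1, natDegree_geom_sum_X hp]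

lemma coeffs_equal {F : IntermediateField ℚ ℂ} {ω : ℂ} {p : ℕ} (hp : 0 < p)
    (hω : ω ^ p = 1) (hω1 : ω ≠ 1) (hd : finrank F F⟮ω⟯ = p - 1)
    (S : ℕ → ℂ) (hS : ∀ c, S c ∈ F)
    (hsum : ∑ c ∈ Finset.range p, S c * ω ^ c = 0) :
    ∀ c < p, ∀ c' < p, S c = S c' := by
  have hint : IsIntegral F ω := (isIntegral_of_pow_eq_one hp hω).tower_top
  set S' : ℕ → F := fun r => ⟨S r, hS r⟩ with hS'
  set P : Polynomial F := ∑ r ∈ Finset.range p, Polynomial.monomial r (S' r) with hP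
  have hcoeff : ∀ r < p, P.coeff r = S' r := by
    intro r hr
    rw [hP, Polynomial.finset_sum_coeff]
    rw [Finset.sum_congr rfl (fun i _ => Polynomial.coeff_monomial (n := i))]
    rw [Finset.sum_ite_eq' (Finset.range p) r S']
    simp [Finset.mem_range.2 hr]
  have haev : Polynomial.aeval ω P = 0 := by
    rw [hP, map_sum]
    rw [Finset.sum_congr rfl (fun i _ => Polynomial.aeval_monomial (n := i) (x := ω))]
    simpa using hsum
  by_cases hP0 : P = 0
  · intro c hc c' hc'
    have h1 := hcoeff c hc
    have h2 := hcoeff c' hc'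
    rw [hP0] at h1 h2
    have e1 : S' c = 0 := by simpa using h1.symm
    have e2 : S' c' = 0 := by simpa using h2.symm
    have v1 : S c = ((0 : F) : ℂ) := congrArg Subtype.val e1
    have v2 : S c' = ((0 : F) : ℂ) := congrArg Subtype.val e2
    rw [v1, v2]
  · obtain ⟨q, hq⟩ := minpoly.dvd F ω haev
    have hqne : q ≠ 0 := by
      intro h; rw [h, mul_zero] at hq; exact hP0 hq
    have hdegP : P.natDegree ≤ p - 1 := by
      rw [hP]
      apply Polynomial.natDegree_sum_le_of_forall_le
      intro c hc
      apply le_trans (Polynomial.natDegree_monomial_le _)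
      exact Nat.le_sub_one_of_lt (Finset.mem_range.1 hc)
    have hdeg1 : (minpoly F ω).natDegree = p - 1 := by
      rw [← IntermediateField.adjoin.finrank hint, hd]
    have hdegq : q.natDegree = 0 := by
      have := Polynomial.natDegree_mul (minpoly.ne_zero hint) hqne
      rw [← hq, hdeg1] at this
      omega
    obtain ⟨a, ha⟩ := Polynomial.natDegree_eq_zero.1 hdegq
    have hPeq : P = (∑ c ∈ Finset.range p, (X : Polynomial F) ^ c) * C a := by
      rw [hq, ← ha, minpoly_geom_sum hp hω hω1 hd]
    have hco : ∀ c < p, P.coeff c = a := by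
      intro c hc
      rw [hPeq, Polynomial.coeff_mul_C, Polynomial.finset_sum_coeff]
      rw [Finset.sum_congr rfl (fun i _ => Polynomial.coeff_X_pow i c)]
      rw [Finset.sum_ite_eq (Finset.range p) c (fun _ => (1:F))]
      simp [Finset.mem_range.2 hc]
    intro c hc c' hc'
    have e1 := (hcoeff c hc).symm.trans (hco c hc)
    have e2 := (hcoeff c' hc').symm.trans (hco c' hc')
    have : S' c = S' c' := e1.trans e2.symm
    exact congrArg Subtype.val this

lemma decomp (p a m : ℕ) (hp : p.Prime) (ha : 1 ≤ a) (hcop : ¬ p ∣ m) (hm : 0 < m)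
    (ζ : ℂ) (hζ : IsPrimitiveRoot ζ (p ^ a)) :
    ∃ e : ℂ → ℕ, ∃ u : ℂ → ℂ, ∀ w : ℂ, w ^ (p ^ a * m) = 1 →
      e w < p ^ a ∧ (u w) ^ m = 1 ∧ w = ζ ^ (e w) * u w ∧ (w = 1 → e w = 0) := by
  haveI : NeZero (p ^ a) := ⟨(Nat.pow_pos hp.pos).ne'⟩
  have hpa1 : 1 < p ^ a := Nat.one_lt_pow (by omega) hp.one_lt
  have hcop' : Nat.Coprime m (p ^ a) :=
    (Nat.Coprime.pow_right a ((hp.coprime_iff_not_dvd.2 hcop).symm))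
  obtain ⟨α, -, hα⟩ := Nat.exists_mul_mod_eq_one_of_coprime hcop' hpa1
  set c := m * α / p ^ a with hc
  have hid : m * α = p ^ a * c + 1 := by
    have h := Nat.div_add_mod (m * α) (p ^ a)
    rw [hα] at h
    rw [hc]
    omega
  set e : ℂ → ℕ := fun w =>
    if h : (w ^ (m * α)) ^ (p ^ a) = 1 then (hζ.eq_pow_of_pow_eq_one h).choose else 0 with he
  set u : ℂ → ℂ := fun w => w ^ (p ^ a * c * (m - 1)) with hu
  refine ⟨e, u, fun w hw => ?_⟩
  have hη : (w ^ (m * α)) ^ (p ^ a) = 1 := by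
    rw [← pow_mul, show m * α * p ^ a = p ^ a * m * α by ring, pow_mul, hw, one_pow]
  have hspec := (hζ.eq_pow_of_pow_eq_one hη).choose_spec
  have hew : e w = (hζ.eq_pow_of_pow_eq_one hη).choose := by rw [he]; simp [hη]
  have h1 : e w < p ^ a := by rw [hew]; exact hspec.1
  have h2 : ζ ^ (e w) = w ^ (m * α) := by rw [hew]; exact hspec.2
  refine ⟨h1, ?_, ?_, ?_⟩
  · rw [hu, ← pow_mul, show p ^ a * c * (m - 1) * m = p ^ a * m * (c * (m - 1)) by ring,
      pow_mul, hw, one_pow]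
  · rw [h2, hu, ← pow_add]
    have hexp : m * α + p ^ a * c * (m - 1) = 1 + p ^ a * m * c := by
      obtain ⟨m', rfl⟩ : ∃ m', m = m' + 1 := ⟨m - 1, by omega⟩
      simp only [Nat.add_sub_cancel]
      rw [hid]; ring
    rw [hexp, pow_add, pow_mul, hw, one_pow, mul_one, pow_one]
  · intro hw1
    subst hw1
    have : ζ ^ (e 1) = 1 := by rw [h2, one_pow]
    have hdvd := (hζ.pow_eq_one_iff_dvd _).1 this
    exact Nat.eq_zero_of_dvd_of_lt hdvd h1
lemma mem_adjoin_pair {n s t : ℕ} (hn : 0 < n) (ht : 0 < t) {ζn : ℂ}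
    (hζn : IsPrimitiveRoot ζn n) (hcop : Nat.Coprime s t) :
    ζn ∈ adjoin ℚ ({ζn ^ s, ζn ^ t} : Set ℂ) := by
  have hζne : ζn ≠ 0 := hζn.ne_zero hn.ne'
  have hb : ζn ^ t ∈ adjoin ℚ ({ζn ^ s, ζn ^ t} : Set ℂ) :=
    subset_adjoin ℚ _ (by simp)
  have ha : ζn ^ s ∈ adjoin ℚ ({ζn ^ s, ζn ^ t} : Set ℂ) :=
    subset_adjoin ℚ _ (by simp)
  rcases eq_or_lt_of_le (show 1 ≤ t from ht) with h1 | h1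
  · refine subset_adjoin ℚ _ (Or.inr ?_)
    show ζn = ζn ^ t
    rw [← h1, pow_one]
  · obtain ⟨x, -, hx⟩ := Nat.exists_mul_mod_eq_one_of_coprime hcop h1
    set k := s * x / t with hk
    have hid : s * x = t * k + 1 := by
      have h := Nat.div_add_mod (s * x) t
      rw [hx] at h
      rw [hk]
      omega
    have hkey : ζn * (ζn ^ t) ^ k = (ζn ^ s) ^ x := by
      rw [← pow_mul, ← pow_mul, ← pow_succ', hid]
    have hne : (ζn ^ t) ^ k ≠ 0 := pow_ne_zero _ (pow_ne_zero _ hζne)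
    have heq : ζn = (ζn ^ s) ^ x * ((ζn ^ t) ^ k)⁻¹ := by
      rw [eq_mul_inv_iff_mul_eq₀ hne]
      exact hkey
    have hmm := mul_mem (pow_mem ha x) (inv_mem (pow_mem hb k))
    rwa [← heq] at hmm

lemma reduction_A (W : Multiset ℂ) (p a m : ℕ) (hp : p.Prime) (ha : 2 ≤ a)
    (hcop : ¬ p ∣ m) (hm : 0 < m)
    (hpow : ∀ w ∈ W, w ^ (p ^ a * m) = 1) (hsum : W.sum = 0)
    (hmin : ∀ T : Multiset ℂ, T ≤ W → T ≠ 0 → T ≠ W → T.sum ≠ 0)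
    (h1 : (1:ℂ) ∈ W) :
    ∀ w ∈ W, w ^ (p * m) = 1 := by
  classical
  set n := p ^ a * m with hn
  have hn0 : 0 < n := Nat.mul_pos (Nat.pow_pos hp.pos) hm
  set ζn := Complex.exp (2 * Real.pi * Complex.I / n) with hζndef
  have hζn : IsPrimitiveRoot ζn n := Complex.isPrimitiveRoot_exp n hn0.ne'
  set ζ : ℂ := ζn ^ m with hζdef
  have hζ : IsPrimitiveRoot ζ (p ^ a) := hζn.pow hn0 (by rw [hn]; ring)
  have hζ1 : ζ ^ (p ^ a) = 1 := hζ.pow_eq_one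
  have hζ0 : ζ ≠ 0 := hζ.ne_zero (Nat.pow_pos hp.pos).ne'
  have hζint : IsIntegral ℚ ζ := isIntegral_of_pow_eq_one (Nat.pow_pos hp.pos) hζ1
  obtain ⟨e, u, hdec⟩ := decomp p a m hp (by omega) hcop hm ζ hζ
  set R := p ^ (a - 1) with hR
  have hR0 : 0 < R := Nat.pow_pos hp.pos
  have hRpa : R * p = p ^ a := by rw [hR, ← pow_succ]; congr 1; omega
  set ε : ℂ := ζn ^ R with hεdef
  have hε : IsPrimitiveRoot ε (p * m) := hζn.pow hn0 (by rw [hn, ← hRpa]; ring)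
  have hpm0 : 0 < p * m := Nat.mul_pos hp.pos hm
  set K := ℚ⟮ε⟯ with hK
  -- finrank computation
  have hcpm : Nat.Coprime p m := hp.coprime_iff_not_dvd.2 hcop
  have hfr : finrank K K⟮ζ⟯ = R := by
    have htw := finrank_adjoin_tower hn0 hpm0 hζn hε hζint
      (pow_mem (mem_adjoin_simple_self ℚ ζn) R)
      (pow_mem (mem_adjoin_simple_self ℚ ζn) m)
      (mem_adjoin_pair hn0 hm hζn (hcpm.pow_left (a - 1)))
    have e1 : Nat.totient n = R * ((p - 1) * Nat.totient m) := by
      rw [hn, Nat.totient_mul ((hcpm.pow_left a)), Nat.totient_prime_pow hp (by omega)]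
      rw [hR]; ring
    have e2 : Nat.totient (p * m) = (p - 1) * Nat.totient m := by
      rw [Nat.totient_mul hcpm, Nat.totient_prime hp]
    rw [e1, e2] at htw
    have hpos : 0 < (p - 1) * Nat.totient m :=
      Nat.mul_pos (by have := hp.one_lt; omega) (Nat.totient_pos.2 hm)
    exact Nat.eq_of_mul_eq_mul_right hpos htw
  set S : ℕ → ℂ := fun r => (W.filter (fun w => e w % R = r)).sum * (ζ ^ r)⁻¹ with hS
  have hSsum : ∀ r, S r * ζ ^ r = (W.filter (fun w => e w % R = r)).sum := by
    intro r
    rw [hS]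
    exact inv_mul_cancel_right₀ (pow_ne_zero r hζ0) _
  have hSmem : ∀ r, S r ∈ K := by
    intro r
    have hmap : S r = ((W.filter (fun w => e w % R = r)).map (fun w => w * (ζ ^ r)⁻¹)).sum := by
      rw [hS, Multiset.sum_map_mul_right, Multiset.map_id']
    rw [hmap]
    refine multiset_sum_mem _ ?_
    intro x hx
    obtain ⟨w, hw, rfl⟩ := Multiset.mem_map.1 hx
    obtain ⟨hwW, hwr⟩ := Multiset.mem_filter.1 hw
    obtain ⟨hlt, hu, hdw, -⟩ := hdec w (hpow w hwW)
    apply mem_adjoin_of_pow_eq_one hpm0 hε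
    have hsplit : ζ ^ (e w) = ζ ^ (R * (e w / R)) * ζ ^ (e w % R) := by
      rw [← pow_add, Nat.div_add_mod]
    have hxact : w * (ζ ^ r)⁻¹ = ζ ^ (R * (e w / R)) * u w := by
      conv_lhs => rw [hdw, hsplit, hwr]
      have hne : (ζ : ℂ) ^ r ≠ 0 := pow_ne_zero r hζ0
      field_simp
    rw [hxact, mul_pow, ← pow_mul,
      show R * (e w / R) * (p * m) = p ^ a * (e w / R * m) by rw [← hRpa]; ring,
      pow_mul, hζ1, one_pow, one_mul, mul_comm p m, pow_mul, hu, one_pow]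
  have hsum' : ∑ r ∈ Finset.range R, S r * ζ ^ r = 0 := by
    rw [Finset.sum_congr rfl (fun r _ => hSsum r)]
    rw [sum_filter_classes W (fun w => e w % R) R (fun w _ => Nat.mod_lt _ hR0)]
    exact hsum
  have hS0 : ∀ r < R, S r = 0 := by
    have := li_lemma K ζ (hζint.tower_top) S hSmem (by rw [hfr]; exact hsum')
    rw [hfr] at this
    exact this
  have hcl : ∀ r < R, (W.filter (fun w => e w % R = r)).sum = 0 := by
    intro r hr
    rw [← hSsum r, hS0 r hr, zero_mul]
  have h1mem : (1:ℂ) ∈ W.filter (fun w => e w % R = 0) := by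
    refine Multiset.mem_filter.2 ⟨h1, ?_⟩
    rw [(hdec 1 (hpow 1 h1)).2.2.2 rfl]
    exact Nat.zero_mod R
  have hW0 : W.filter (fun w => e w % R = 0) = W := by
    by_contra hne
    exact hmin _ (Multiset.filter_le _ _)
      (fun h0 => by rw [h0] at h1mem; exact absurd h1mem (Multiset.notMem_zero _))
      hne (hcl 0 hR0)
  have hall : ∀ w ∈ W, e w % R = 0 := Multiset.filter_eq_self.1 hW0
  intro w hw
  obtain ⟨hlt, hu, hdw, -⟩ := hdec w (hpow w hw)
  have heq : e w = R * (e w / R) := by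
    have := Nat.div_add_mod (e w) R
    have := hall w hw
    omega
  have hz : (ζ ^ e w) ^ (p * m) = 1 := by
    rw [← pow_mul]
    conv_lhs => rw [heq]
    rw [show R * (e w / R) * (p * m) = p ^ a * (e w / R * m) by rw [← hRpa]; ring,
      pow_mul, hζ1, one_pow]
  have hupm : (u w) ^ (p * m) = 1 := by rw [mul_comm p m, pow_mul, hu, one_pow]
  conv_lhs => rw [hdw]
  rw [mul_pow, hz, hupm, one_mul]
lemma reduction_B (W : Multiset ℂ) (p m : ℕ) (hp : p.Prime)
    (hcop : ¬ p ∣ m) (hm : 0 < m) (hcard : Multiset.card W < p)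
    (hpow : ∀ w ∈ W, w ^ (p * m) = 1) (hsum : W.sum = 0)
    (hmin : ∀ T : Multiset ℂ, T ≤ W → T ≠ 0 → T ≠ W → T.sum ≠ 0)
    (h1 : (1:ℂ) ∈ W) :
    ∀ w ∈ W, w ^ m = 1 := by
  classical
  set n := p * m with hn
  have hn0 : 0 < n := Nat.mul_pos hp.pos hm
  set ζn := Complex.exp (2 * Real.pi * Complex.I / n) with hζndef
  have hζn : IsPrimitiveRoot ζn n := Complex.isPrimitiveRoot_exp n hn0.ne'
  set ζ : ℂ := ζn ^ m with hζdef
  have hζ : IsPrimitiveRoot ζ p := hζn.pow hn0 (by rw [hn]; ring)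
  have hζ1 : ζ ^ p = 1 := hζ.pow_eq_one
  have hζ0 : ζ ≠ 0 := hζ.ne_zero hp.pos.ne'
  have hζint : IsIntegral ℚ ζ := isIntegral_of_pow_eq_one hp.pos hζ1
  have hζp1 : IsPrimitiveRoot ζ (p ^ 1) := by rwa [pow_one]
  obtain ⟨e, u, hdec'⟩ := decomp p 1 m hp le_rfl hcop hm ζ hζp1
  have hdec : ∀ w : ℂ, w ^ (p * m) = 1 →
      e w < p ∧ u w ^ m = 1 ∧ w = ζ ^ e w * u w ∧ (w = 1 → e w = 0) := by
    intro w hw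
    have := hdec' w (by rwa [pow_one])
    rwa [pow_one] at this
  set ε : ℂ := ζn ^ p with hεdef
  have hε : IsPrimitiveRoot ε m := hζn.pow hn0 (by rw [hn])
  set F := ℚ⟮ε⟯ with hF
  have hcpm : Nat.Coprime p m := hp.coprime_iff_not_dvd.2 hcop
  have hfr : finrank F F⟮ζ⟯ = p - 1 := by
    have htw := finrank_adjoin_tower hn0 hm hζn hε hζint
      (pow_mem (mem_adjoin_simple_self ℚ ζn) p)
      (pow_mem (mem_adjoin_simple_self ℚ ζn) m)
      (mem_adjoin_pair hn0 hm hζn hcpm)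
    have e1 : Nat.totient n = (p - 1) * Nat.totient m := by
      rw [hn, Nat.totient_mul hcpm, Nat.totient_prime hp]
    rw [e1] at htw
    have hpos : 0 < Nat.totient m := Nat.totient_pos.2 hm
    exact Nat.eq_of_mul_eq_mul_right hpos htw
  set S : ℕ → ℂ := fun c => (W.filter (fun w => e w = c)).sum * (ζ ^ c)⁻¹ with hS
  have hSsum : ∀ c, S c * ζ ^ c = (W.filter (fun w => e w = c)).sum := by
    intro c
    rw [hS]
    exact inv_mul_cancel_right₀ (pow_ne_zero c hζ0) _
  have hSmem : ∀ c, S c ∈ F := by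
    intro c
    have hmap : S c = ((W.filter (fun w => e w = c)).map (fun w => w * (ζ ^ c)⁻¹)).sum := by
      rw [hS, Multiset.sum_map_mul_right, Multiset.map_id']
    rw [hmap]
    refine multiset_sum_mem _ ?_
    intro x hx
    obtain ⟨w, hw, rfl⟩ := Multiset.mem_map.1 hx
    obtain ⟨hwW, hwc⟩ := Multiset.mem_filter.1 hw
    obtain ⟨hlt, hu, hdw, -⟩ := hdec w (hpow w hwW)
    apply mem_adjoin_of_pow_eq_one hm hε
    have hxact : w * (ζ ^ c)⁻¹ = u w := by
      conv_lhs => rw [hdw, hwc]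
      rw [mul_comm, ← mul_assoc, inv_mul_cancel₀ (pow_ne_zero c hζ0), one_mul]
    rw [hxact, hu]
  have hsum' : ∑ c ∈ Finset.range p, S c * ζ ^ c = 0 := by
    rw [Finset.sum_congr rfl (fun c _ => hSsum c)]
    rw [sum_filter_classes W (fun w => e w) p (fun w hw => (hdec w (hpow w hw)).1)]
    exact hsum
  have hSeq := coeffs_equal hp.pos hζ1 (hζ.ne_one hp.one_lt) hfr S hSmem hsum'
  -- pigeonhole: some class below p is empty
  have hpig : ∃ c0 < p, ∀ w ∈ W, e w ≠ c0 := by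
    have hnotsub : ¬ (Finset.range p ⊆ (W.map e).toFinset) := by
      intro hsub
      have h1' := Finset.card_le_card hsub
      rw [Finset.card_range] at h1'
      have h2' := Multiset.toFinset_card_le (W.map e)
      rw [Multiset.card_map] at h2'
      omega
    obtain ⟨c0, hc0r, hc0n⟩ := Finset.not_subset.1 hnotsub
    refine ⟨c0, Finset.mem_range.1 hc0r, fun w hw hew => ?_⟩
    exact hc0n (Multiset.mem_toFinset.2 (by rw [← hew]; exact Multiset.mem_map_of_mem e hw))
  obtain ⟨c0, hc0p, hc0⟩ := hpig
  have hS0 : S c0 = 0 := by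
    have hemp : W.filter (fun w => e w = c0) = 0 :=
      Multiset.filter_eq_nil.2 (fun w hw => hc0 w hw)
    show (W.filter (fun w => e w = c0)).sum * (ζ ^ c0)⁻¹ = 0
    rw [hemp]
    simp
  have hSall : ∀ c < p, S c = 0 := fun c hc => (hSeq c hc c0 hc0p).trans hS0
  have hcl : ∀ c < p, (W.filter (fun w => e w = c)).sum = 0 := by
    intro c hc
    rw [← hSsum c, hSall c hc, zero_mul]
  have h1mem : (1:ℂ) ∈ W.filter (fun w => e w = 0) :=
    Multiset.mem_filter.2 ⟨h1, (hdec 1 (hpow 1 h1)).2.2.2 rfl⟩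
  have hW0 : W.filter (fun w => e w = 0) = W := by
    by_contra hne
    exact hmin _ (Multiset.filter_le _ _)
      (fun h0 => by rw [h0] at h1mem; exact absurd h1mem (Multiset.notMem_zero _))
      hne (hcl 0 hp.pos)
  have hall : ∀ w ∈ W, e w = 0 := Multiset.filter_eq_self.1 hW0
  intro w hw
  obtain ⟨hlt, hu, hdw, -⟩ := hdec w (hpow w hw)
  have he0 := hall w hw
  conv_lhs => rw [hdw, he0]
  rw [pow_zero, one_mul, hu]
lemma mann (W : Multiset ℂ)
    (hsum : W.sum = 0) (hmin : ∀ T : Multiset ℂ, T ≤ W → T ≠ 0 → T ≠ W → T.sum ≠ 0)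
    (h1 : (1:ℂ) ∈ W) :
    ∀ n : ℕ, 0 < n → (∀ w ∈ W, w ^ n = 1) →
      ∀ w ∈ W, w ^ (∏ p ∈ (Multiset.card W + 1).primesBelow, p) = 1 := by
  intro n
  induction n using Nat.strong_induction_on with
  | _ n ih =>
    intro hn hpow
    set N := ∏ p ∈ (Multiset.card W + 1).primesBelow, p with hN
    by_cases hdvd : n ∣ N
    · obtain ⟨k, hk⟩ := hdvd
      intro w hw
      rw [hk, pow_mul, hpow w hw, one_pow]
    · by_cases hsq : Squarefree n
      · -- squarefree: there is a large prime factor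
        have hbig : ∃ p ∈ n.primeFactors, Multiset.card W + 1 ≤ p := by
          by_contra hcon
          push_neg at hcon
          have hsub : n.primeFactors ⊆ (Multiset.card W + 1).primesBelow := by
            intro q hq
            rw [Nat.mem_primesBelow]
            exact ⟨hcon q hq, Nat.prime_of_mem_primeFactors hq⟩
          have : n ∣ N := by
            rw [hN, ← Nat.prod_primeFactors_of_squarefree hsq]
            exact Finset.prod_dvd_prod_of_subset _ _ _ hsub
          exact hdvd this
        obtain ⟨p, hpmem, hple⟩ := hbig
        have hp : p.Prime := Nat.prime_of_mem_primeFactors hpmem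
        have hpdvd : p ∣ n := Nat.dvd_of_mem_primeFactors hpmem
        set m := n / p with hm'
        have hnm : p * m = n := Nat.mul_div_cancel' hpdvd
        have hm : 0 < m := Nat.div_pos (Nat.le_of_dvd hn hpdvd) hp.pos
        have hnd : ¬ p ∣ m := by
          intro hdm
          obtain ⟨k, hk⟩ := hdm
          have : p * p ∣ n := ⟨k, by rw [← hnm, hk]; ring⟩
          exact hp.not_isUnit (hsq p this)
        have hcard : Multiset.card W < p := by omega
        have hpow' : ∀ w ∈ W, w ^ (p * m) = 1 := by
          intro w hw; rw [hnm]; exact hpow w hw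
        have happly := reduction_B W p m hp hnd hm hcard hpow' hsum hmin h1
        exact ih m (by rw [hm']; exact Nat.div_lt_self hn hp.one_lt) hm happly
      · -- not squarefree: there is a prime with square dividing n
        have : ∃ p, p.Prime ∧ p * p ∣ n := by
          rw [Nat.squarefree_iff_prime_squarefree] at hsq
          push_neg at hsq
          exact hsq
        obtain ⟨p, hp, hpp⟩ := this
        set a := n.factorization p with ha'
        have ha2 : 2 ≤ a := by
          rw [ha']
          rw [← Nat.Prime.pow_dvd_iff_le_factorization hp hn.ne']
          rwa [pow_two]
        set m := n / p ^ a with hm'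
        have hnm : p ^ a * m = n := Nat.ordProj_mul_ordCompl_eq_self n p
        have hm : 0 < m := Nat.ordCompl_pos p hn.ne'
        have hnd : ¬ p ∣ m := Nat.not_dvd_ordCompl hp hn.ne'
        have hpow' : ∀ w ∈ W, w ^ (p ^ a * m) = 1 := by
          intro w hw; rw [hnm]; exact hpow w hw
        have happly := reduction_A W p a m hp ha2 hnd hm hpow' hsum hmin h1
        have hlt : p * m < n := by
          rw [← hnm]
          have : p < p ^ a := by
            conv_lhs => rw [← pow_one p]
            exact Nat.pow_lt_pow_right hp.one_lt (by omega)
          exact Nat.mul_lt_mul_of_lt_of_le this le_rfl (by omega)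
        exact ih (p * m) hlt (Nat.mul_pos hp.pos hm) happly

end

lemma exists_common_exponent (M : Multiset ℂ) (h : ∀ z ∈ M, ∃ k : ℕ, 0 < k ∧ z ^ k = 1) :
    ∃ n : ℕ, 0 < n ∧ ∀ z ∈ M, z ^ n = 1 := by
  induction M using Multiset.induction with
  | empty => exact ⟨1, one_pos, by simp⟩
  | cons a s ih =>
    obtain ⟨n, hn, hs⟩ := ih (fun z hz => h z (Multiset.mem_cons_of_mem hz))
    obtain ⟨k, hk, hak⟩ := h a (Multiset.mem_cons_self a s)
    refine ⟨k * n, Nat.mul_pos hk hn, fun z hz => ?_⟩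
    rcases Multiset.mem_cons.1 hz with rfl | hz
    · rw [pow_mul, hak, one_pow]
    · rw [mul_comm, pow_mul, hs z hz, one_pow]

def minimalVanishingSums (ζ : ℂ) (ℓ : ℕ) : Set (Multiset ℂ) :=
  {M | Multiset.card M = ℓ ∧ ζ ∈ M ∧
    (∀ z ∈ M, ∃ n : ℕ, 0 < n ∧ z ^ n = 1) ∧ M.sum = 0 ∧
    ∀ T : Multiset ℂ, T ≤ M → T ≠ 0 → T ≠ M → T.sum ≠ 0}

theorem minimalVanishingSums_finite_and_card_bound (ζ : ℂ)
    (hζ : ∃ n : ℕ, 0 < n ∧ ζ ^ n = 1) (ℓ : ℕ) (hℓ : 1 ≤ ℓ) :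
    (minimalVanishingSums ζ ℓ).Finite ∧
    Nat.card (minimalVanishingSums ζ ℓ) ≤ ℓ ^ (3 * ℓ ^ 2) := by
  obtain ⟨n0, hn0, hζn⟩ := hζ
  have hζne : ζ ≠ 0 := fun h => by simp [h, zero_pow hn0.ne'] at hζn
  set N := ∏ p ∈ (ℓ + 1).primesBelow, p with hN
  have hNpos : 0 < N := Finset.prod_pos fun p hp => (Nat.prime_of_mem_primesBelow hp).pos
  -- every member of the set has all elements in ζ * (N-th roots of unity)
  have key : ∀ M ∈ minimalVanishingSums ζ ℓ, ∀ z ∈ M, (z * ζ⁻¹) ^ N = 1 := by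
    intro M hM z hz
    obtain ⟨hcard, hζM, hroots, hsum, hmin⟩ := hM
    obtain ⟨n, hn, hpow⟩ := exists_common_exponent M hroots
    set W : Multiset ℂ := M.map (· * ζ⁻¹) with hW
    have hWpow : ∀ w ∈ W, w ^ (n * n0) = 1 := by
      intro w hw
      obtain ⟨y, hy, rfl⟩ := Multiset.mem_map.1 hw
      have h1 : y ^ (n * n0) = 1 := by rw [pow_mul, hpow y hy, one_pow]
      have h2 : ζ ^ (n * n0) = 1 := by rw [mul_comm, pow_mul, hζn, one_pow]
      rw [mul_pow, inv_pow, h1, h2, inv_one, mul_one]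
    have hWsum : W.sum = 0 := by
      rw [hW, Multiset.sum_map_mul_right]
      simp [hsum]
    have hMW : W.map (· * ζ) = M := by
      rw [hW, Multiset.map_map]
      have : ((· * ζ) ∘ (· * ζ⁻¹)) = id := by
        funext x; simp [Function.comp, mul_assoc, inv_mul_cancel₀ hζne]
      rw [this, Multiset.map_id]
    have hWmin : ∀ T : Multiset ℂ, T ≤ W → T ≠ 0 → T ≠ W → T.sum ≠ 0 := by
      intro T hT hT0 hTW hTsum
      refine hmin (T.map (· * ζ)) ?_ ?_ ?_ ?_
      · rw [← hMW]; exact Multiset.map_le_map hT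
      · simpa using hT0
      · intro h
        apply hTW
        have hinj : Function.Injective (· * ζ) := fun a b hab =>
          mul_right_cancel₀ hζne hab
        exact Multiset.map_injective hinj (by rw [h, hMW])
      · rw [Multiset.sum_map_mul_right]
        simp [hTsum]
    have h1W : (1:ℂ) ∈ W := by
      rw [hW, Multiset.mem_map]
      exact ⟨ζ, hζM, mul_inv_cancel₀ hζne⟩
    have hcardW : Multiset.card W = ℓ := by rw [hW, Multiset.card_map, hcard]
    have := mann W hWsum hWmin h1W (n * n0) (Nat.mul_pos hn hn0) hWpow
      (z * ζ⁻¹) (Multiset.mem_map_of_mem _ hz)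
    rwa [hcardW] at this
  -- counting
  classical
  set Tfin : Finset ℂ := ((Polynomial.nthRoots N (1:ℂ)).toFinset).image (fun u => ζ * u)
    with hTfin
  have hTmem : ∀ M ∈ minimalVanishingSums ζ ℓ, ∀ z ∈ M, z ∈ Tfin := by
    intro M hM z hz
    have := key M hM z hz
    rw [hTfin, Finset.mem_image]
    refine ⟨z * ζ⁻¹, Multiset.mem_toFinset.2 ?_, by field_simp⟩
    rw [Polynomial.mem_nthRoots hNpos]
    exact this
  set g : (Fin ℓ → ℂ) → Multiset ℂ := fun f => (List.ofFn f : Multiset ℂ) with hg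
  set S : Finset (Fin ℓ → ℂ) := Fintype.piFinset (fun _ => Tfin) with hS
  have hsub : minimalVanishingSums ζ ℓ ⊆ ↑(S.image g) := by
    intro M hM
    have hcard : Multiset.card M = ℓ := hM.1
    have hlen : M.toList.length = ℓ := by rw [Multiset.length_toList, hcard]
    refine Finset.mem_coe.2 (Finset.mem_image.2 ⟨fun i => M.toList.get (Fin.cast hlen.symm i), ?_, ?_⟩)
    · rw [hS, Fintype.mem_piFinset]
      intro i
      refine hTmem M hM _ (Multiset.mem_toList.1 ?_)
      rw [List.get_eq_getElem]
      exact List.getElem_mem _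
    · rw [hg]
      have heq : (List.ofFn fun i : Fin ℓ => M.toList.get (Fin.cast hlen.symm i)) = M.toList := by
        apply List.ext_getElem
        · simp [hlen]
        · intro i h1 h2
          simp
      show (↑(List.ofFn fun i : Fin ℓ => M.toList.get (Fin.cast hlen.symm i)) : Multiset ℂ) = M
      rw [heq]
      exact Multiset.coe_toList M
  constructor
  · exact Set.Finite.subset (S.image g).finite_toSet hsub
  · have h1 : Nat.card (minimalVanishingSums ζ ℓ) ≤ (S.image g).card := by
      rw [Nat.card_coe_set_eq]
      calc (minimalVanishingSums ζ ℓ).ncard ≤ (↑(S.image g) : Set (Multiset ℂ)).ncard :=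
            Set.ncard_le_ncard hsub (S.image g).finite_toSet
        _ = (S.image g).card := Set.ncard_coe_finset _
    have h2 : (S.image g).card ≤ Tfin.card ^ ℓ := by
      calc (S.image g).card ≤ S.card := Finset.card_image_le
        _ = Tfin.card ^ ℓ := by rw [hS, Fintype.card_piFinset_const]
    have h3 : Tfin.card ≤ N := by
      calc Tfin.card ≤ (Polynomial.nthRoots N (1:ℂ)).toFinset.card := Finset.card_image_le
        _ ≤ Multiset.card (Polynomial.nthRoots N (1:ℂ)) := Multiset.toFinset_card_le _
        _ ≤ N := Polynomial.card_nthRoots N 1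
    have h4 : N ≤ ℓ ^ ℓ := by
      calc N ≤ ℓ ^ (ℓ + 1).primesBelow.card := by
            apply Finset.prod_le_pow_card
            intro p hp
            exact Nat.lt_succ_iff.1 (Nat.lt_of_mem_primesBelow hp)
        _ ≤ ℓ ^ ℓ := by
            apply Nat.pow_le_pow_right (by omega)
            calc (ℓ + 1).primesBelow.card ≤ (Finset.Icc 1 ℓ).card := by
                  apply Finset.card_le_card
                  intro p hp
                  have h1 := (Nat.prime_of_mem_primesBelow hp).one_lt
                  have h2 := Nat.lt_of_mem_primesBelow hp
                  rw [Finset.mem_Icc]; omega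
              _ = ℓ := by rw [Nat.card_Icc]; omega
    calc Nat.card (minimalVanishingSums ζ ℓ) ≤ Tfin.card ^ ℓ := le_trans h1 h2
      _ ≤ (ℓ ^ ℓ) ^ ℓ := Nat.pow_le_pow_left (le_trans h3 h4) ℓ
      _ = ℓ ^ (ℓ * ℓ) := by rw [← pow_mul]
      _ ≤ ℓ ^ (3 * ℓ ^ 2) := by
          apply Nat.pow_le_pow_right (by omega)
          nlinarith
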